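/- Assume φ̄ ∈ C²([0,1];𝓗) solves the MEP problem and assumption (A) is satisfied. Then λ̄'(0) > 0, λ̄'(1) > 0 and λ̄'(s̄) < 0; moreover λ̄(α) > 0 for all α ∈ (0,s̄) and λ̄(α) < 0 for all α ∈ (s̄,1). -/

import Mathlib

noncomputable section

open Set
open scoped RealInnerProductSpace Topology

variable {H : Type*} [NormedAddCommGroup H] [InnerProductSpace ℝ H] [CompleteSpace H]

/-- Orthogonal projection of `y` onto the span of `v` (`P_v y`). -/
def Pproj (v y : H) : H := ⟪y, ‖v‖⁻¹ • v⟫ • (‖v‖⁻¹ • v)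

/-- Projection of `y` onto the orthogonal complement of `v` (`P_v^⊥ y`). -/
def Pperp (v y : H) : H := y - Pproj v y

/-- `f` is `C¹` on `[a,b]` with derivative `f'`. -/
def C1On {F : Type*} [NormedAddCommGroup F] [NormedSpace ℝ F] (a b : ℝ) (f f' : ℝ → F) : Prop :=
  (∀ α ∈ Icc a b, HasDerivWithinAt f (f' α) (Icc a b) α) ∧ ContinuousOn f' (Icc a b)

/-- `f` is `C²` on `[a,b]`. -/
def C2On {F : Type*} [NormedAddCommGroup F] [NormedSpace ℝ F] (a b : ℝ) (f f' f'' : ℝ → F) : Prop :=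
  C1On a b f f' ∧ C1On a b f' f''

/-- The length `L(φ)` of a curve with derivative `φ'`. -/
def len {F : Type*} [NormedAddCommGroup F] (φ' : ℝ → F) : ℝ := ∫ s in (0:ℝ)..1, ‖φ' s‖

/-- `Γ(φ)(α) = ∫₀^α |φ'| − α L(φ)`. -/
def Gam {F : Type*} [NormedAddCommGroup F] (φ' : ℝ → F) (α : ℝ) : ℝ :=
  (∫ s in (0:ℝ)..α, ‖φ' s‖) - α * len φ'

/-- The admissible class `U` of regular curves joining `yA` to `yB`. -/
def InU (yA yB : H) (φ φ' : ℝ → H) : Prop :=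
  C1On 0 1 φ φ' ∧ φ 0 = yA ∧ φ 1 = yB ∧ ∀ α ∈ Icc (0:ℝ) 1, φ' α ≠ 0

/-- The MEP equations. -/
def SolvesMEP (E : H → ℝ) (φ φ' : ℝ → H) : Prop :=
  (∀ α ∈ Icc (0:ℝ) 1, Pperp (φ' α) (gradient E (φ α)) = 0) ∧
  (∀ α ∈ Icc (0:ℝ) 1, Gam φ' α = 0)

/-- Strong local minimizer. -/
def IsStrongMin (E : H → ℝ) (hess : H → H →L[ℝ] H) (y : H) : Prop :=
  gradient E y = 0 ∧ ∃ c > 0, ∀ u : H, c * ‖u‖ ^ 2 ≤ ⟪hess y u, u⟫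

/-- Index-1 saddle point. -/
def IsIndex1Saddle (E : H → ℝ) (hess : H → H →L[ℝ] H) (y : H) : Prop :=
  gradient E y = 0 ∧
    ∃ v₁ : H, v₁ ≠ 0 ∧ (∃ l < (0:ℝ), hess y v₁ = l • v₁) ∧
      ∃ c > 0, ∀ u : H, ⟪u, v₁⟫ = 0 → c * ‖u‖ ^ 2 ≤ ⟪hess y u, u⟫

/-- Assumption (A). -/
def AssumpA (E : H → ℝ) (hess : H → H →L[ℝ] H) (yA yB : H)
    (φb φb' φb'' : ℝ → H) (sbar : ℝ) : Prop :=
  C2On 0 1 φb φb' φb'' ∧ InU yA yB φb φb' ∧ SolvesMEP E φb φb' ∧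
  sbar ∈ Ioo (0:ℝ) 1 ∧
  IsStrongMin E hess yA ∧ IsStrongMin E hess yB ∧
  IsIndex1Saddle E hess (φb sbar) ∧
  ∀ α ∈ Icc (0:ℝ) 1, gradient E (φb α) = 0 → α = 0 ∨ α = sbar ∨ α = 1

/-- `λ̄(α) = L(φ̄)⁻² (∇E(φ̄(α)), φ̄'(α))`. -/
def lamBar (E : H → ℝ) (φ φ' : ℝ → H) (α : ℝ) : ℝ :=
  ((len φ') ^ 2)⁻¹ * ⟪gradient E (φ α), φ' α⟫

/-- The MEP operator `𝓕`. -/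
def Fop (E : H → ℝ) (sbar σA σB : ℝ) (φ φ' : ℝ → H) (α : ℝ) : H :=
  Pperp (φ' α) (gradient E (φ α))
    - ((‖φ' α‖ - len φ') / len φ') • Pproj (φ' α) (gradient E (φ α))
    + (α * (α - 1) * ‖φ' α‖ / (sbar * (sbar - 1) * len φ')) •
        Pproj (φ' α) (gradient E (φ sbar))
    + ((σA + σB) * (Gam φ' α - α * (α - 1) / (sbar * (sbar - 1)) * Gam φ' sbar)) •
        (‖φ' α‖⁻¹ • φ' α)

/-- Membership in the image space `Y`. -/
def MemY {F : Type*} [NormedAddCommGroup F] [NormedSpace ℝ F] (sbar : ℝ) (f : ℝ → F) : Prop :=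
  ContinuousOn f (Icc (0:ℝ) 1) ∧ f 0 = 0 ∧ f 1 = 0 ∧
  DifferentiableWithinAt ℝ f (Icc (0:ℝ) 1) 0 ∧
  DifferentiableWithinAt ℝ f (Icc (0:ℝ) 1) sbar ∧
  DifferentiableWithinAt ℝ f (Icc (0:ℝ) 1) 1

/-- Membership in the space `X`. -/
def MemX {F : Type*} [NormedAddCommGroup F] [NormedSpace ℝ F] (ψ ψ' : ℝ → F) : Prop :=
  C1On 0 1 ψ ψ' ∧ ψ 0 = 0 ∧ ψ 1 = 0

/-- The `C¹` (and `X`) norm. -/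
def normC1 {F : Type*} [NormedAddCommGroup F] (ψ ψ' : ℝ → F) : ℝ :=
  (⨆ α : Icc (0:ℝ) 1, ‖ψ (α : ℝ)‖) + ⨆ α : Icc (0:ℝ) 1, ‖ψ' (α : ℝ)‖

/-- The weighted norm on `Y`. -/
def normY {F : Type*} [NormedAddCommGroup F] (sbar : ℝ) (f : ℝ → F) : ℝ :=
  (⨆ α : Ioo (0:ℝ) 1, ‖f (α : ℝ)‖ / |(α : ℝ) * ((α : ℝ) - 1)|) +
    ⨆ α : ↥(Icc (0:ℝ) 1 \ {sbar}), ‖f (α : ℝ) - f sbar‖ / |(α : ℝ) - sbar|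

/-- `∫₀¹ (φ̄'(s), ψ'(s))/|φ̄'(s)| ds`. -/
def gInt (φb' ψ' : ℝ → H) : ℝ := ∫ s in (0:ℝ)..1, ⟪φb' s, ψ' s⟫ / ‖φb' s‖

/-- `g_ψ(α)` (the linearisation `δΓ(φ̄)ψ`). -/
def gFun (φb' ψ' : ℝ → H) (α : ℝ) : ℝ :=
  (∫ s in (0:ℝ)..α, ⟪φb' s, ψ' s⟫ / ‖φb' s‖) - α * gInt φb' ψ'

/-- `g_ψ'(α)`. -/
def gFun' (φb' ψ' : ℝ → H) (α : ℝ) : ℝ := ⟪φb' α, ψ' α⟫ / ‖φb' α‖ - gInt φb' ψ'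

/-- The linearised MEP operator `T = δ𝓕(φ̄)`. -/
def Tlin (E : H → ℝ) (hess : H → H →L[ℝ] H) (φb φb' : ℝ → H)
    (sbar σA σB : ℝ) (ψ ψ' : ℝ → H) (α : ℝ) : H :=
  Pperp (φb' α) (hess (φb α) (ψ α) - lamBar E φb φb' α • ψ' α)
    + (α * (α - 1) / (sbar * (sbar - 1))) • Pproj (φb' α) (hess (φb sbar) (ψ sbar))
    + ((σA + σB) * (gFun φb' ψ' α - α * (α - 1) / (sbar * (sbar - 1)) * gFun φb' ψ' sbar)
        - lamBar E φb φb' α * gFun' φb' ψ' α) • (‖φb' α‖⁻¹ • φb' α)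

/-- Assumption (B). -/
def AssumpB (hess : H → H →L[ℝ] H) (yA yB vA vB : H) (σA σB : ℝ) : Prop :=
  hess yA vA = σA • vA ∧ hess yB vB = σB • vB ∧
  (∀ μ ∈ spectrum ℝ (hess yA), σA ≤ μ) ∧
  (∀ μ ∈ spectrum ℝ (hess yB), σB ≤ μ) ∧
  (∃ ε > 0, ∀ μ ∈ spectrum ℝ (hess yA), μ ≠ σA → σA + ε ≤ μ) ∧
  (∃ ε > 0, ∀ μ ∈ spectrum ℝ (hess yB), μ ≠ σB → σB + ε ≤ μ) ∧
  (∀ u : H, hess yA u = σA • u → ∃ c : ℝ, u = c • vA) ∧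
  (∀ u : H, hess yB u = σB • u → ∃ c : ℝ, u = c • vB)

/-- `P_v` as a continuous linear map. -/
def projL (v : H) : H →L[ℝ] H := (innerSL ℝ (‖v‖⁻¹ • v)).smulRight (‖v‖⁻¹ • v)

/-- `P_v^⊥` as a continuous linear map. -/
def projPerpL (v : H) : H →L[ℝ] H := ContinuousLinearMap.id ℝ H - projL v

/-- `B(α) = P⊥ ∇²E(φ̄(α)) P⊥`. -/
def Bop (hess : H → H →L[ℝ] H) (φb φb' : ℝ → H) (α : ℝ) : H →L[ℝ] H :=
  (projPerpL (φb' α)).comp ((hess (φb α)).comp (projPerpL (φb' α)))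

/-- `D(α) y = −(y,t'(α))t(α) − (y,t(α))t'(α)`. -/
def Dop (t t' : ℝ → H) (α : ℝ) : H →L[ℝ] H :=
  -((innerSL ℝ (t' α)).smulRight (t α)) - (innerSL ℝ (t α)).smulRight (t' α)

/-- The operator `A(α)`. -/
def Aop {K : Type*} [NormedAddCommGroup K] [InnerProductSpace ℝ K] [CompleteSpace K]
    (E : H → ℝ) (hess : H → H →L[ℝ] H) (φb φb' t' : ℝ → H)
    (Q Q' : ℝ → K →L[ℝ] H) (α : ℝ) : K →L[ℝ] K :=
  (ContinuousLinearMap.adjoint (Q α)).comp ((Bop hess φb φb' α).comp (Q α))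
    - lamBar E φb φb' α •
        ((ContinuousLinearMap.adjoint (Q α)).comp
            ((Dop (fun s => ‖φb' s‖⁻¹ • φb' s) t' α).comp (Q α))
          - (ContinuousLinearMap.adjoint (Q α)).comp (Q' α))

/-- `ω_S`. -/
def omegaS (hess : H → H →L[ℝ] H) (yS : H) : ℝ :=
  sInf {l : ℝ | l ∈ spectrum ℝ (hess yS) ∧ 0 < l}

/-- `ω_B`. -/
def omegaB (hess : H → H →L[ℝ] H) (yB : H) (σB : ℝ) : ℝ :=
  sInf {l : ℝ | l ∈ spectrum ℝ (hess yB) ∧ l ≠ σB}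

/-- The tube `𝒰_ε` around the path. -/
def Utube (φb : ℝ → H) (ε : ℝ) : Set H := {y : H | ∃ α ∈ Icc (0:ℝ) 1, ‖y - φb α‖ ≤ ε}

/-- Restriction of a second derivative to a subspace. -/
def restrict2 (K : Submodule ℝ H) (T : H →L[ℝ] H →L[ℝ] ℝ) : K →L[ℝ] K →L[ℝ] ℝ :=
  (((ContinuousLinearMap.compL ℝ K H ℝ).flip K.subtypeL)).comp (T.comp K.subtypeL)

/-- `C⁰` distance between `E'` (on the subspace `K`) and `E`, over `S`. -/
def subC0dist (K : Submodule ℝ H) (E : H → ℝ) (E' : K → ℝ) (S : Set K) : ℝ :=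
  ⨆ y : S, |E' y.1 - E (y.1 : H)|

/-- `C¹` distance between `E'` (on the subspace `K`) and `E`, over `S`. -/
def subC1dist (K : Submodule ℝ H) (E : H → ℝ) (E' : K → ℝ) (S : Set K) : ℝ :=
  subC0dist K E E' S +
    ⨆ y : S, ‖fderiv ℝ E' y.1 - (fderiv ℝ E (y.1 : H)).comp K.subtypeL‖

/-- `C²` distance between `E'` (on the subspace `K`) and `E`, over `S`. -/
def subC2dist (K : Submodule ℝ H) (E : H → ℝ) (E' : K → ℝ) (S : Set K) : ℝ :=
  subC1dist K E E' S +
    ⨆ y : S, @norm (K →L[ℝ] K →L[ℝ] ℝ)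
      (ContinuousLinearMap.hasOpNorm (𝕜 := ℝ) (𝕜₂ := ℝ) (σ₁₂ := RingHom.id ℝ) (E := K)
        (F := K →L[ℝ] ℝ))
      (fderiv ℝ (fun z => fderiv ℝ E' z) y.1
        - restrict2 K (fderiv ℝ (fun z => fderiv ℝ E z) (y.1 : H)))


section Aux

lemma hess_symm' (E : H → ℝ) (hE : ContDiff ℝ 3 E)
    (hess : H → H →L[ℝ] H) (hhess : ∀ y : H, HasFDerivAt (gradient E) (hess y) y)
    (y u v : H) : ⟪hess y u, v⟫ = ⟪hess y v, u⟫ := by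
  have hf : ∀ z : H, HasFDerivAt E (innerSL ℝ (gradient E z)) z := by
    intro z
    have hd : DifferentiableAt ℝ E z := (hE.differentiable (by norm_num)).differentiableAt
    have := hd.hasGradientAt
    rw [hasGradientAt_iff_hasFDerivAt] at this
    have he : (InnerProductSpace.toDual ℝ H) (gradient E z) = innerSL ℝ (gradient E z) := by
      ext w; simp
    rwa [he] at this
  have hx : HasFDerivAt (fun z => innerSL ℝ (gradient E z))
      ((innerSL ℝ (E := H)).comp (hess y)) y :=
    (innerSL ℝ (E := H)).hasFDerivAt.comp y (hhess y)
  have := second_derivative_symmetric hf hx u v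
  simpa using this

lemma speed_const' (φb φb' : ℝ → H) (hC1 : C1On 0 1 φb φb')
    (hGam : ∀ α ∈ Icc (0:ℝ) 1, Gam φb' α = 0) :
    ∀ α ∈ Icc (0:ℝ) 1, ‖φb' α‖ = len φb' := by
  intro α hα
  set h : ℝ → ℝ := fun s => ‖φb' s‖ with hh
  have hcont : ContinuousOn h (Icc 0 1) := hC1.2.norm
  haveI : Fact (α ∈ Icc (0:ℝ) 1) := ⟨hα⟩
  have hint : IntervalIntegrable h MeasureTheory.volume 0 α := by
    apply ContinuousOn.intervalIntegrable
    apply hcont.mono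
    rw [uIcc_of_le hα.1]
    exact Icc_subset_Icc le_rfl hα.2
  have hd : HasDerivWithinAt (fun u => ∫ x in (0:ℝ)..u, h x) (h α) (Icc 0 1) α :=
    intervalIntegral.integral_hasDerivWithinAt_right hint
      (hcont.stronglyMeasurableAtFilter_nhdsWithin measurableSet_Icc α)
      (hcont α hα)
  have hd2 : HasDerivWithinAt (fun u => ∫ x in (0:ℝ)..u, h x) (len φb') (Icc 0 1) α := by
    have hlin : HasDerivWithinAt (fun u : ℝ => u * len φb') (len φb') (Icc 0 1) α := by
      simpa using (hasDerivWithinAt_id α (Icc (0:ℝ) 1)).mul_const (len φb')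
    apply hlin.congr
    · intro y hy
      have := hGam y hy
      unfold Gam at this
      linarith
    · have := hGam α hα
      unfold Gam at this
      linarith
  have hu : UniqueDiffWithinAt ℝ (Icc (0:ℝ) 1) α := (uniqueDiffOn_Icc one_pos) α hα
  have := hd.derivWithin hu
  rw [hd2.derivWithin hu] at this
  exact this.symm

end Aux

theorem stmt7
    (E : H → ℝ) (hE : ContDiff ℝ 3 E)
    (hess : H → H →L[ℝ] H) (hhess : ∀ y : H, HasFDerivAt (gradient E) (hess y) y)
    (yA yB : H) (φb φb' φb'' : ℝ → H) (sbar : ℝ)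
    (hA : AssumpA E hess yA yB φb φb' φb'' sbar) :
    (∃ d : ℝ, HasDerivWithinAt (lamBar E φb φb') d (Icc (0:ℝ) 1) 0 ∧ 0 < d) ∧
    (∃ d : ℝ, HasDerivWithinAt (lamBar E φb φb') d (Icc (0:ℝ) 1) 1 ∧ 0 < d) ∧
    (∃ d : ℝ, HasDerivWithinAt (lamBar E φb φb') d (Icc (0:ℝ) 1) sbar ∧ d < 0) ∧
    (∀ α ∈ Ioo (0:ℝ) sbar, 0 < lamBar E φb φb' α) ∧
    (∀ α ∈ Ioo sbar (1:ℝ), lamBar E φb φb' α < 0) := by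
  obtain ⟨hC2, hU, hMEP, hsbar, hminA, hminB, hsad, hcrit⟩ := hA
  obtain ⟨hC1, hφ0, hφ1, hreg⟩ := hU
  have hspeed : ∀ α ∈ Icc (0:ℝ) 1, ‖φb' α‖ = len φb' := speed_const' φb φb' hC1 hMEP.2
  set L := len φb' with hLdef
  set lam := lamBar E φb φb' with hlamdef
  have h0mem : (0:ℝ) ∈ Icc (0:ℝ) 1 := by norm_num
  have h1mem : (1:ℝ) ∈ Icc (0:ℝ) 1 := by norm_num
  have hsmem : sbar ∈ Icc (0:ℝ) 1 := ⟨hsbar.1.le, hsbar.2.le⟩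
  have hL : 0 < L := by
    have h := hspeed 0 h0mem
    rw [← h]
    exact norm_pos_iff.mpr (hreg 0 h0mem)
  -- gradient along the path is lam • φ'
  have hgradeq : ∀ α ∈ Icc (0:ℝ) 1, gradient E (φb α) = lam α • φb' α := by
    intro α hα
    have hp := hMEP.1 α hα
    unfold Pperp at hp
    have h1 : gradient E (φb α) = Pproj (φb' α) (gradient E (φb α)) := sub_eq_zero.mp hp
    rw [h1]
    unfold Pproj
    rw [real_inner_smul_right, smul_smul, hlamdef]
    unfold lamBar
    rw [hspeed α hα, ← hLdef]
    congr 1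
    rw [sq, mul_inv]
    ring
  -- values of lam at critical points
  have hgrad0 : gradient E (φb 0) = 0 := by rw [hφ0]; exact hminA.1
  have hgrad1 : gradient E (φb 1) = 0 := by rw [hφ1]; exact hminB.1
  have hgradS : gradient E (φb sbar) = 0 := hsad.1
  have hlamval : ∀ α : ℝ, gradient E (φb α) = 0 → lam α = 0 := by
    intro α hg
    rw [hlamdef]
    unfold lamBar
    rw [hg, inner_zero_left, mul_zero]
  have lam0 : lam 0 = 0 := hlamval 0 hgrad0
  have lam1 : lam 1 = 0 := hlamval 1 hgrad1
  have lams : lam sbar = 0 := hlamval sbar hgradS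
  -- lam is nonzero away from 0, sbar, 1
  have hnonzero : ∀ α ∈ Icc (0:ℝ) 1, α ≠ 0 → α ≠ sbar → α ≠ 1 → lam α ≠ 0 := by
    intro α hα h0 hs h1 hz
    have : gradient E (φb α) = 0 := by rw [hgradeq α hα, hz, zero_smul]
    rcases hcrit α hα this with h | h | h
    · exact h0 h
    · exact hs h
    · exact h1 h
  -- derivative of lam
  have hlamderiv : ∀ α ∈ Icc (0:ℝ) 1, HasDerivWithinAt lam
      ((L^2)⁻¹ * (⟪gradient E (φb α), φb'' α⟫ + ⟪hess (φb α) (φb' α), φb' α⟫))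
      (Icc 0 1) α := by
    intro α hα
    have hG : HasDerivWithinAt (fun s => gradient E (φb s)) (hess (φb α) (φb' α))
        (Icc 0 1) α := (hhess (φb α)).comp_hasDerivWithinAt α (hC1.1 α hα)
    have hinner := hG.inner ℝ (hC2.2.1 α hα)
    exact hinner.const_mul ((L^2)⁻¹)
  have hcontlam : ContinuousOn lam (Icc (0:ℝ) 1) := fun α hα =>
    (hlamderiv α hα).continuousWithinAt
  have hu : ∀ α ∈ Icc (0:ℝ) 1, UniqueDiffWithinAt ℝ (Icc (0:ℝ) 1) α :=
    uniqueDiffOn_Icc one_pos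
  -- d0 and d1 positive
  have hder_min : ∀ α ∈ Icc (0:ℝ) 1, gradient E (φb α) = 0 → IsStrongMin E hess (φb α) →
      0 < (L^2)⁻¹ * (⟪gradient E (φb α), φb'' α⟫ + ⟪hess (φb α) (φb' α), φb' α⟫) := by
    intro α hα hg hmin
    obtain ⟨c, hc, hcineq⟩ := hmin.2
    rw [hg, inner_zero_left, zero_add]
    have h1 : c * ‖φb' α‖^2 ≤ ⟪hess (φb α) (φb' α), φb' α⟫ := hcineq (φb' α)
    rw [hspeed α hα] at h1
    have h2 : 0 < c * L^2 := by positivity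
    have h3 : 0 < (L^2)⁻¹ := by positivity
    exact mul_pos h3 (lt_of_lt_of_le h2 h1)
  have hd0 := hlamderiv 0 h0mem
  have hd0pos := hder_min 0 h0mem hgrad0 (by rw [hφ0]; exact hminA)
  have hd1 := hlamderiv 1 h1mem
  have hd1pos := hder_min 1 h1mem hgrad1 (by rw [hφ1]; exact hminB)
  -- sign on (0, sbar)
  have hsignA : ∀ α ∈ Ioo (0:ℝ) sbar, 0 < lam α := by
    intro α₀ hα₀
    have hα₀mem : α₀ ∈ Icc (0:ℝ) 1 := ⟨hα₀.1.le, hα₀.2.le.trans hsbar.2.le⟩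
    by_contra hcon
    push_neg at hcon
    have hneg : lam α₀ < 0 := lt_of_le_of_ne hcon
      (hnonzero α₀ hα₀mem (ne_of_gt hα₀.1) (ne_of_lt hα₀.2)
        (ne_of_lt (hα₀.2.trans hsbar.2)))
    -- find β ∈ (0, α₀) with lam β > 0
    have hsub : Ioo (0:ℝ) α₀ ⊆ Icc (0:ℝ) 1 \ {0} := by
      intro y hy
      exact ⟨⟨hy.1.le, hy.2.le.trans hα₀mem.2⟩, ne_of_gt hy.1⟩
    have hslope : Filter.Tendsto (slope lam 0) (𝓝[Ioo (0:ℝ) α₀] 0)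
        (𝓝 ((L^2)⁻¹ * (⟪gradient E (φb 0), φb'' 0⟫ + ⟪hess (φb 0) (φb' 0), φb' 0⟫))) :=
      (hasDerivWithinAt_iff_tendsto_slope.mp hd0).mono_left (nhdsWithin_mono _ hsub)
    haveI : (𝓝[Ioo (0:ℝ) α₀] (0:ℝ)).NeBot := by
      apply mem_closure_iff_nhdsWithin_neBot.mp
      rw [closure_Ioo (ne_of_lt hα₀.1)]
      exact ⟨le_rfl, hα₀.1.le⟩
    have hev : ∀ᶠ β in 𝓝[Ioo (0:ℝ) α₀] (0:ℝ), 0 < slope lam 0 β :=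
      hslope.eventually (eventually_gt_nhds hd0pos)
    obtain ⟨β, hβs, hβmem⟩ := (hev.and self_mem_nhdsWithin).exists
    have hβpos : 0 < lam β := by
      rw [slope_def_field, lam0, sub_zero, sub_zero] at hβs
      have := mul_pos hβs hβmem.1
      rwa [div_mul_cancel₀ _ (ne_of_gt hβmem.1)] at this
    -- IVT gives a zero in (0, sbar)
    have hβle : β ≤ α₀ := hβmem.2.le
    have hIccsub : Icc β α₀ ⊆ Icc (0:ℝ) 1 := Icc_subset_Icc hβmem.1.le hα₀mem.2
    have h0in : (0:ℝ) ∈ Icc (lam α₀) (lam β) := ⟨hneg.le, hβpos.le⟩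
    obtain ⟨γ, hγmem, hγ⟩ := intermediate_value_Icc' hβle (hcontlam.mono hIccsub) h0in
    exact hnonzero γ (hIccsub hγmem)
      (ne_of_gt (lt_of_lt_of_le hβmem.1 hγmem.1))
      (ne_of_lt (lt_of_le_of_lt hγmem.2 hα₀.2))
      (ne_of_lt (lt_of_le_of_lt hγmem.2 (hα₀.2.trans hsbar.2))) hγ
  -- sign on (sbar, 1)
  have hsignB : ∀ α ∈ Ioo sbar (1:ℝ), lam α < 0 := by
    intro α₀ hα₀
    have hα₀mem : α₀ ∈ Icc (0:ℝ) 1 := ⟨hsbar.1.le.trans hα₀.1.le, hα₀.2.le⟩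
    by_contra hcon
    push_neg at hcon
    have hpos : 0 < lam α₀ := lt_of_le_of_ne hcon
      (Ne.symm (hnonzero α₀ hα₀mem (ne_of_gt (hsbar.1.trans hα₀.1))
        (ne_of_gt hα₀.1) (ne_of_lt hα₀.2)))
    have hsub : Ioo α₀ (1:ℝ) ⊆ Icc (0:ℝ) 1 \ {1} := by
      intro y hy
      exact ⟨⟨hα₀mem.1.trans hy.1.le, hy.2.le⟩, ne_of_lt hy.2⟩
    have hslope : Filter.Tendsto (slope lam 1) (𝓝[Ioo α₀ (1:ℝ)] 1)
        (𝓝 ((L^2)⁻¹ * (⟪gradient E (φb 1), φb'' 1⟫ + ⟪hess (φb 1) (φb' 1), φb' 1⟫))) :=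
      (hasDerivWithinAt_iff_tendsto_slope.mp hd1).mono_left (nhdsWithin_mono _ hsub)
    haveI : (𝓝[Ioo α₀ (1:ℝ)] (1:ℝ)).NeBot := by
      apply mem_closure_iff_nhdsWithin_neBot.mp
      rw [closure_Ioo (ne_of_lt hα₀.2)]
      exact ⟨hα₀.2.le, le_rfl⟩
    have hev : ∀ᶠ β in 𝓝[Ioo α₀ (1:ℝ)] (1:ℝ), 0 < slope lam 1 β :=
      hslope.eventually (eventually_gt_nhds hd1pos)
    obtain ⟨β, hβs, hβmem⟩ := (hev.and self_mem_nhdsWithin).exists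
    have hβneg : lam β < 0 := by
      rw [slope_def_field, lam1, sub_zero] at hβs
      have hβm : β - 1 < 0 := sub_neg.mpr hβmem.2
      by_contra hge
      push_neg at hge
      have : lam β / (β - 1) ≤ 0 := div_nonpos_iff.mpr (Or.inl ⟨hge, hβm.le⟩)
      linarith
    have hβle : α₀ ≤ β := hβmem.1.le
    have hIccsub : Icc α₀ β ⊆ Icc (0:ℝ) 1 := Icc_subset_Icc hα₀mem.1 hβmem.2.le
    have h0in : (0:ℝ) ∈ Icc (lam β) (lam α₀) := ⟨hβneg.le, hpos.le⟩
    obtain ⟨γ, hγmem, hγ⟩ := intermediate_value_Icc' hβle (hcontlam.mono hIccsub) h0in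
    exact hnonzero γ (hIccsub hγmem)
      (ne_of_gt (lt_of_lt_of_le (hsbar.1.trans hα₀.1) hγmem.1))
      (ne_of_gt (lt_of_lt_of_le hα₀.1 hγmem.1))
      (ne_of_lt (lt_of_le_of_lt hγmem.2 hβmem.2)) hγ
  -- derivative at sbar is negative
  have hdS := hlamderiv sbar hsmem
  set ds := (L^2)⁻¹ * (⟪gradient E (φb sbar), φb'' sbar⟫ +
      ⟪hess (φb sbar) (φb' sbar), φb' sbar⟫) with hdsdef
  have hdSneg : ds < 0 := by
    obtain ⟨_, v₁, hv₁ne, ⟨l, hl, hev⟩, c', hc', hcineq'⟩ := hsad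
    set x := φb' sbar with hxdef
    -- x is an eigenvector of the Hessian with eigenvalue ds
    have heig : hess (φb sbar) x = ds • x := by
      have hG : HasDerivWithinAt (fun s => gradient E (φb s)) (hess (φb sbar) x)
          (Icc 0 1) sbar := (hhess (φb sbar)).comp_hasDerivWithinAt sbar (hC1.1 sbar hsmem)
      have hRHS : HasDerivWithinAt (fun s => lam s • φb' s)
          (lam sbar • φb'' sbar + ds • x) (Icc 0 1) sbar :=
        hdS.smul (hC2.2.1 sbar hsmem)
      have hG2 : HasDerivWithinAt (fun s => gradient E (φb s))
          (lam sbar • φb'' sbar + ds • x) (Icc 0 1) sbar :=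
        hRHS.congr hgradeq (hgradeq sbar hsmem)
      have huS := hu sbar hsmem
      have := hG.derivWithin huS
      rw [hG2.derivWithin huS] at this
      rw [← this, lams, zero_smul, zero_add]
    -- ds ≤ 0 from the sign of lam on (sbar, 1)
    have hdsle : ds ≤ 0 := by
      have hsub : Ioo sbar (1:ℝ) ⊆ Icc (0:ℝ) 1 \ {sbar} := by
        intro y hy
        exact ⟨⟨hsbar.1.le.trans hy.1.le, hy.2.le⟩, ne_of_gt hy.1⟩
      have hslope : Filter.Tendsto (slope lam sbar) (𝓝[Ioo sbar (1:ℝ)] sbar) (𝓝 ds) :=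
        (hasDerivWithinAt_iff_tendsto_slope.mp hdS).mono_left (nhdsWithin_mono _ hsub)
      haveI : (𝓝[Ioo sbar (1:ℝ)] sbar).NeBot := by
        apply mem_closure_iff_nhdsWithin_neBot.mp
        rw [closure_Ioo (ne_of_lt hsbar.2)]
        exact ⟨le_rfl, hsbar.2.le⟩
      have hev2 : ∀ᶠ β in 𝓝[Ioo sbar (1:ℝ)] sbar, slope lam sbar β ≤ 0 := by
        filter_upwards [self_mem_nhdsWithin] with β hβ
        rw [slope_def_field, lams, sub_zero]
        exact (div_nonpos_iff.mpr (Or.inr ⟨(hsignB β hβ).le, (sub_pos.mpr hβ.1).le⟩))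
      exact le_of_tendsto hslope hev2
    -- case analysis on ⟪x, v₁⟫
    by_cases ha : ⟪x, v₁⟫ = 0
    · -- x ⊥ v₁ forces ds ≥ c' > 0, contradiction
      exfalso
      have h1 : c' * ‖x‖^2 ≤ ⟪hess (φb sbar) x, x⟫ := hcineq' x ha
      rw [heig, real_inner_smul_left, real_inner_self_eq_norm_sq] at h1
      have hxL : ‖x‖ = L := hspeed sbar hsmem
      rw [hxL] at h1
      have hL2 : 0 < L^2 := by positivity
      have : c' ≤ ds := by
        have := (mul_le_mul_iff_of_pos_right hL2).mp h1
        exact this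
      linarith
    · -- x ∥ v₁ forces ds = l < 0
      have h1 : ⟪hess (φb sbar) x, v₁⟫ = ds * ⟪x, v₁⟫ := by
        rw [heig, real_inner_smul_left]
      have h2 : ⟪hess (φb sbar) x, v₁⟫ = l * ⟪x, v₁⟫ := by
        rw [hess_symm' E hE hess hhess (φb sbar) x v₁, hev, real_inner_smul_left,
          real_inner_comm]
      have : ds = l := by
        have h3 : ds * ⟪x, v₁⟫ = l * ⟪x, v₁⟫ := by rw [← h1, h2]
        exact mul_right_cancel₀ ha h3
      rw [this]
      exact hl
  exact ⟨⟨_, hd0, hd0pos⟩, ⟨_, hd1, hd1pos⟩, ⟨ds, hdS, hdSneg⟩, hsignA, hsignB⟩
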